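/- For every integer k ≥ 1 and every probability distribution D on [−1,1] satisfying the k-sample median constraint, the expectation of D is at most 1/√k. -/

import Mathlib

open MeasureTheory

/-- A probability distribution `μ` on `[-1,1]` satisfies the `k`-sample median constraint if
for `k` i.i.d. samples `Y_1, …, Y_k ~ μ`, `Pr[Y_1 + ⋯ + Y_k ≤ 0] ≥ 1/2`. -/
def MedianConstraint (k : ℕ) (μ : Measure ℝ) : Prop :=
  (1 : ENNReal) / 2 ≤ Measure.pi (fun _ : Fin k => μ) {y | ∑ i, y i ≤ 0}

set_option maxHeartbeats 1000000


lemma pi_integral_prod {k : ℕ} (μ : Measure ℝ) [IsProbabilityMeasure μ] (f : Fin k → ℝ → ℝ) :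
    ∫ y, ∏ i, f i (y i) ∂Measure.pi (fun _ : Fin k => μ) = ∏ i, ∫ x, f i x ∂μ := by
  letI : MeasureSpace ℝ := @MeasureSpace.mk ℝ _ μ
  haveI : SigmaFinite (volume : Measure ℝ) := (inferInstance : SigmaFinite μ)
  exact MeasureTheory.integral_fintype_prod_eq_prod f


/-- For every `k ≥ 1` and every probability distribution on `[-1,1]`
satisfying the `k`-sample median constraint, the expectation is at most `1/√k`. -/
theorem stmt2 (k : ℕ) (hk : 1 ≤ k) (μ : Measure ℝ) [IsProbabilityMeasure μ]
    (hsupp : μ (Set.Icc (-1 : ℝ) 1)ᶜ = 0)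
    (hmed : MedianConstraint k μ) :
    ∫ x, x ∂μ ≤ 1 / Real.sqrt k := by
  unfold MedianConstraint at hmed
  set π := Measure.pi (fun _ : Fin k => μ) with hπ
  set m := ∫ x, x ∂μ with hm
  set v := ∫ x, x ^ 2 ∂μ with hv
  -- a.e. bounds
  have hb : ∀ᵐ x ∂μ, |x| ≤ 1 := by
    have : ∀ᵐ x ∂μ, x ∈ Set.Icc (-1 : ℝ) 1 := by
      rw [MeasureTheory.ae_iff]
      exact hsupp
    filter_upwards [this] with x hx
    exact abs_le.2 ⟨hx.1, hx.2⟩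
  have hid : Integrable (fun x : ℝ => x) μ := by
    refine (integrable_const (1 : ℝ)).mono' measurable_id.aestronglyMeasurable ?_
    filter_upwards [hb] with x hx using by simpa using hx
  have hsq : Integrable (fun x : ℝ => x ^ 2) μ := by
    refine (integrable_const (1 : ℝ)).mono' (measurable_id.pow_const 2).aestronglyMeasurable ?_
    filter_upwards [hb] with x hx
    have : |x| ^ 2 ≤ 1 := by nlinarith [abs_nonneg x]
    simpa [abs_pow, sq_abs] using this
  have hv1 : v ≤ 1 := by
    calc v ≤ ∫ _x, (1 : ℝ) ∂μ := by
            refine integral_mono_ae hsq (integrable_const 1) ?_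
            filter_upwards [hb] with x hx
            nlinarith [abs_nonneg x, sq_abs x]
      _ = 1 := by simp
  -- coordinate a.e. bounds on π
  have hcb : ∀ᵐ y ∂π, ∀ i, |y i| ≤ 1 := by
    rw [MeasureTheory.ae_all_iff]
    intro i
    exact (Measure.tendsto_eval_ae_ae (μ := fun _ : Fin k => μ) (i := i)).eventually hb
  have hSmeas : Measurable (fun y : Fin k → ℝ => ∑ i, y i) :=
    Finset.measurable_sum _ fun i _ => measurable_pi_apply i
  -- moments
  have d1 : ∀ i : Fin k, ∫ y, y i ∂π = m := by
    intro i
    have h1 : (fun y : Fin k → ℝ => y i)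
        = fun y => ∏ j, (fun j => if j = i then (fun x : ℝ => x) else fun _ => (1:ℝ)) j (y j) := by
      funext y
      rw [Finset.prod_eq_single i (fun j _ hj => by simp [hj]) (by simp)]
      simp
    rw [h1, pi_integral_prod]
    rw [Finset.prod_eq_single i (fun j _ hj => by simp [hj]) (by simp)]
    simp
    rfl
  have d2 : ∀ i : Fin k, ∫ y, (y i) ^ 2 ∂π = v := by
    intro i
    have h1 : (fun y : Fin k → ℝ => (y i) ^ 2)
        = fun y => ∏ j, (fun j => if j = i then (fun x : ℝ => x ^ 2) else fun _ => (1:ℝ)) j (y j) := by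
      funext y
      rw [Finset.prod_eq_single i (fun j _ hj => by simp [hj]) (by simp)]
      simp
    rw [h1, pi_integral_prod]
    rw [Finset.prod_eq_single i (fun j _ hj => by simp [hj]) (by simp)]
    simp
    rfl
  have d3 : ∀ i j : Fin k, j ≠ i → ∫ y, y i * y j ∂π = m * m := by
    intro i j hij
    set f : Fin k → ℝ → ℝ := fun l => if l = i then (fun x : ℝ => x)
      else if l = j then (fun x : ℝ => x) else fun _ => (1:ℝ) with hf
    have h1 : (fun y : Fin k → ℝ => y i * y j) = fun y => ∏ l, f l (y l) := by
      funext y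
      have hsub : ({i, j} : Finset (Fin k)) ⊆ Finset.univ := Finset.subset_univ _
      rw [← Finset.prod_subset hsub (fun l _ hl => by
        simp only [Finset.mem_insert, Finset.mem_singleton, not_or] at hl
        simp [hf, hl.1, hl.2])]
      rw [Finset.prod_pair (fun h => hij h.symm)]
      simp [hf, hij]
    rw [h1, pi_integral_prod]
    have hsub : ({i, j} : Finset (Fin k)) ⊆ Finset.univ := Finset.subset_univ _
    rw [← Finset.prod_subset hsub (fun l _ hl => by
      simp only [Finset.mem_insert, Finset.mem_singleton, not_or] at hl
      simp [hf, hl.1, hl.2])]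
    rw [Finset.prod_pair (fun h => hij h.symm)]
    simp [hf, hij]
    rfl
  -- integrabilities on π
  have Iint : ∀ i : Fin k, Integrable (fun y : Fin k → ℝ => y i) π := by
    intro i
    refine (integrable_const (1 : ℝ)).mono' (measurable_pi_apply i).aestronglyMeasurable ?_
    filter_upwards [hcb] with y hy using by simpa using hy i
  have Isum : Integrable (fun y : Fin k → ℝ => ∑ i, y i) π :=
    integrable_finset_sum _ fun i _ => Iint i
  have hSb : ∀ᵐ y ∂π, |∑ i, y i| ≤ (k : ℝ) := by
    filter_upwards [hcb] with y hy
    calc |∑ i, y i| ≤ ∑ i, |y i| := Finset.abs_sum_le_sum_abs _ _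
      _ ≤ ∑ _i : Fin k, (1:ℝ) := Finset.sum_le_sum fun i _ => hy i
      _ = k := by simp
  have Isq : Integrable (fun y : Fin k → ℝ => (∑ i, y i) ^ 2) π := by
    refine (integrable_const ((k:ℝ) ^ 2)).mono' (hSmeas.pow_const 2).aestronglyMeasurable ?_
    filter_upwards [hSb] with y hy
    calc ‖(∑ i, y i) ^ 2‖ = |∑ i, y i| ^ 2 := by rw [Real.norm_eq_abs, abs_pow]
      _ ≤ (k:ℝ) ^ 2 := pow_le_pow_left₀ (abs_nonneg _) hy 2
  -- sum moments
  have e1 : ∫ y, (∑ i, y i) ∂π = k * m := by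
    rw [integral_finset_sum _ fun i _ => Iint i]
    simp [d1, Finset.sum_const]
  have e2 : ∫ y, (∑ i, y i) ^ 2 ∂π = k * v + (k * (k - 1)) * (m * m) := by
    have expand : ∀ y : Fin k → ℝ, (∑ i, y i) ^ 2 = ∑ i, ∑ j, y i * y j := by
      intro y
      rw [sq, Finset.sum_mul_sum]
    have Iij : ∀ i j : Fin k, Integrable (fun y : Fin k → ℝ => y i * y j) π := by
      intro i j
      refine (integrable_const (1 : ℝ)).mono'
        ((measurable_pi_apply i).mul (measurable_pi_apply j)).aestronglyMeasurable ?_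
      filter_upwards [hcb] with y hy
      calc ‖y i * y j‖ = |y i| * |y j| := by rw [Real.norm_eq_abs, abs_mul]
        _ ≤ 1 * 1 := mul_le_mul (hy i) (hy j) (abs_nonneg _) zero_le_one
        _ = 1 := one_mul 1
    simp_rw [expand]
    rw [integral_finset_sum _ fun i _ => integrable_finset_sum _ fun j _ => Iij i j]
    have inner : ∀ i : Fin k, ∫ y, ∑ j, y i * y j ∂π = v + (k - 1 : ℝ) * (m * m) := by
      intro i
      rw [integral_finset_sum _ fun j _ => Iij i j]
      rw [← Finset.add_sum_erase _ _ (Finset.mem_univ i)]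
      have : ∫ y, y i * y i ∂π = v := by
        simp_rw [← sq]; exact d2 i
      rw [this]
      rw [Finset.sum_congr rfl (fun j hj => d3 i j (Finset.ne_of_mem_erase hj))]
      rw [Finset.sum_const, Finset.card_erase_of_mem (Finset.mem_univ i)]
      simp only [Finset.card_univ, Fintype.card_fin, nsmul_eq_mul]
      rw [Nat.cast_sub hk]
      simp
    rw [Finset.sum_congr rfl (fun i _ => inner i), Finset.sum_const]
    simp only [Finset.card_univ, Fintype.card_fin, nsmul_eq_mul]
    ring
  -- probability of S > 0
  have hmeasS : MeasurableSet {y : Fin k → ℝ | ∑ i, y i ≤ 0} :=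
    measurableSet_le hSmeas measurable_const
  have hp : (π {y | 0 < ∑ i, y i}).toReal ≤ 1 / 2 := by
    have hcompl : {y : Fin k → ℝ | 0 < ∑ i, y i} = {y | ∑ i, y i ≤ 0}ᶜ := by
      ext y; simp [not_le]
    have h1 : π {y | 0 < ∑ i, y i} ≤ 1 / 2 := by
      rw [hcompl, prob_compl_eq_one_sub hmeasS]
      calc (1 : ENNReal) - π {y | ∑ i, y i ≤ 0} ≤ 1 - 1/2 := by
            exact tsub_le_tsub_left hmed 1
        _ = 1/2 := by
            rw [ENNReal.sub_eq_of_eq_add (by norm_num : (1:ENNReal)/2 ≠ ⊤)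
              (ENNReal.add_halves 1).symm]
    calc (π {y | 0 < ∑ i, y i}).toReal ≤ ((1:ENNReal)/2).toReal :=
          ENNReal.toReal_mono (by norm_num) h1
      _ = 1/2 := by norm_num
  -- the truncation function
  set S : (Fin k → ℝ) → ℝ := fun y => ∑ i, y i with hS
  set g : (Fin k → ℝ) → ℝ := fun y => if 0 < S y then S y else 0 with hg
  have hmeasPos : MeasurableSet {y : Fin k → ℝ | 0 < S y} :=
    measurableSet_lt measurable_const hSmeas
  have Ig : Integrable g π := by
    refine (integrable_const ((k:ℝ))).mono'
      (Measurable.ite hmeasPos hSmeas measurable_const).aestronglyMeasurable ?_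
    filter_upwards [hSb] with y hy
    rw [Real.norm_eq_abs, hg]
    by_cases h : 0 < S y
    · simpa [h] using hy
    · simp [h]
  have hle1 : (k : ℝ) * m ≤ ∫ y, g y ∂π := by
    rw [← e1]
    refine integral_mono Isum Ig fun y => ?_
    by_cases h : 0 < S y
    · simp [hg, h]
      exact le_rfl
    · simp only [hg, if_neg h]
      exact le_of_not_gt h
  -- key bound with parameter t
  set B : ℝ := k + (k * ((k:ℝ) - 1)) * (m * m) with hB
  have hk1 : (1:ℝ) ≤ k := by exact_mod_cast hk
  have hcross : 0 ≤ (k:ℝ) * ((k:ℝ) - 1) * (m * m) :=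
    mul_nonneg (mul_nonneg (by linarith) (by linarith)) (mul_self_nonneg m)
  have hBpos : 0 < B := by rw [hB]; linarith
  have he2B : ∫ y, S y ^ 2 ∂π ≤ B := by
    rw [e2, hB]
    have : (k:ℝ) * v ≤ k := by nlinarith
    linarith
  set t : ℝ := Real.sqrt (2 * B) with ht
  have htpos : 0 < t := Real.sqrt_pos.2 (by linarith)
  have htsq : t ^ 2 = 2 * B := Real.sq_sqrt (by linarith)
  -- pointwise bound g ≤ S²/(2t) + (t/2)·1_{S>0}
  set h : (Fin k → ℝ) → ℝ :=
    fun y => S y ^ 2 / (2 * t) + (t / 2) * Set.indicator {y | 0 < S y} (fun _ => 1) y with hh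
  have Ih : Integrable h π :=
    (Isq.div_const (2 * t)).add (((integrable_const (1:ℝ)).indicator hmeasPos).const_mul (t / 2))
  have hgh : ∀ y, g y ≤ h y := by
    intro y
    by_cases hpos : 0 < S y
    · have hind : Set.indicator {y | 0 < S y} (fun _ => (1:ℝ)) y = 1 :=
        Set.indicator_of_mem (show y ∈ {y | 0 < S y} from hpos) (fun _ => (1:ℝ))
      simp only [hg, hh, if_pos hpos, hind, mul_one]
      rw [div_add' _ _ _ (by positivity), le_div_iff₀ (by positivity)]
      nlinarith [sq_nonneg (S y - t)]
    · have hind : Set.indicator {y | 0 < S y} (fun _ => (1:ℝ)) y = 0 :=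
        Set.indicator_of_notMem (show y ∉ {y | 0 < S y} from hpos) (fun _ => (1:ℝ))
      simp only [hg, hh, if_neg hpos, hind, mul_zero, add_zero]
      positivity
  have hInth : ∫ y, h y ∂π ≤ t / 4 + t / 4 := by
    have hsplit : ∫ y, h y ∂π
        = (∫ y, S y ^ 2 ∂π) / (2 * t) + (t / 2) * (π {y | 0 < S y}).toReal := by
      rw [hh, integral_add (Isq.div_const (2 * t))
        (((integrable_const (1:ℝ)).indicator hmeasPos).const_mul (t / 2)),
        integral_div, integral_const_mul, integral_indicator_const (1:ℝ) hmeasPos]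
      simp
      rfl
    rw [hsplit]
    have h1 : (∫ y, S y ^ 2 ∂π) / (2 * t) ≤ t / 4 := by
      have hstep : (∫ y, S y ^ 2 ∂π) / (2 * t) ≤ B / (2 * t) :=
        div_le_div_of_nonneg_right he2B (by positivity)
      refine hstep.trans ?_
      rw [div_le_div_iff₀ (by positivity) (by norm_num)]
      nlinarith
    have h2 : (t / 2) * (π {y | 0 < S y}).toReal ≤ t / 4 := by
      calc (t / 2) * (π {y | 0 < S y}).toReal ≤ (t / 2) * (1 / 2) :=
            mul_le_mul_of_nonneg_left hp (by positivity)
        _ = t / 4 := by ring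
    linarith
  have hkm : (k:ℝ) * m ≤ t / 2 := by
    have := hle1.trans ((integral_mono Ig Ih hgh).trans hInth)
    linarith
  -- conclude
  rcases le_or_gt m 0 with hm0 | hm0
  · have : 0 < Real.sqrt k := Real.sqrt_pos.2 (by linarith)
    calc m ≤ 0 := hm0
      _ ≤ 1 / Real.sqrt k := by positivity
  · have hkpos : (0:ℝ) < k := by linarith
    have hsq2 : ((k:ℝ) * m) ^ 2 ≤ (t / 2) ^ 2 := by
      have h0 : 0 ≤ (k:ℝ) * m := by positivity
      nlinarith
    have hmk : m ^ 2 ≤ (k:ℝ)⁻¹ := by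
      have hkey : (k:ℝ)^2 * m^2 ≤ B / 2 := by nlinarith [hsq2, htsq]
      rw [hB] at hkey
      have hkey2 : ((k:ℝ)+1) * m^2 ≤ 1 := by nlinarith [hkpos, sq_nonneg m]
      have hkm2 : (k:ℝ) * m^2 ≤ 1 := by nlinarith [sq_nonneg m]
      rw [inv_eq_one_div, le_div_iff₀ hkpos]
      linarith
    calc m ≤ Real.sqrt ((k:ℝ)⁻¹) := Real.le_sqrt_of_sq_le hmk
      _ = 1 / Real.sqrt k := by rw [Real.sqrt_inv, one_div]
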